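/- Under the hypotheses X_i = Y_i + U_i − U_{i+1}, (Y_i), (U_i) square integrable, liminf (1/n)E(Σ_{i=1}^n Y_i)² > 0 and U_n/√n → 0 in L², the normalized sums (1/σ̄_n)Σ_{i=1}^n X_i converge in distribution to a standard normal law if and only if (1/σ_n)Σ_{i=1}^n Y_i do, where σ̄_n² = E(Σ X_i)², σ_n² = E(Σ Y_i)². -/

import Mathlib

open MeasureTheory Filter Finset ProbabilityTheory
open scoped ENNReal Topology

open Metric

lemma slutsky_aux {Ω : Type*} {m0 : MeasurableSpace Ω} {μ : Measure Ω} [IsProbabilityMeasure μ]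
    {γ : Measure ℝ} [IsProbabilityMeasure γ] {A B : ℕ → Ω → ℝ}
    (hA : ∀ n, AEMeasurable (A n) μ) (hB : ∀ n, AEMeasurable (B n) μ)
    (hdiff : TendstoInMeasure μ (fun n ω => A n ω - B n ω) atTop 0)
    (hBconv : ∀ g : BoundedContinuousFunction ℝ ℝ,
      Tendsto (fun n => ∫ ω, g (B n ω) ∂μ) atTop (𝓝 (∫ x, g x ∂γ)))
    (g : BoundedContinuousFunction ℝ ℝ) :
    Tendsto (fun n => ∫ ω, g (A n ω) ∂μ) atTop (𝓝 (∫ x, g x ∂γ)) := by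
  set νA : ℕ → ProbabilityMeasure ℝ := fun n => ⟨μ.map (A n), Measure.isProbabilityMeasure_map (hA n)⟩
    with hνA
  set νB : ℕ → ProbabilityMeasure ℝ := fun n => ⟨μ.map (B n), Measure.isProbabilityMeasure_map (hB n)⟩
    with hνB
  set γ' : ProbabilityMeasure ℝ := ⟨γ, inferInstance⟩ with hγ'
  have hcoeA : ∀ n, (νA n : Measure ℝ) = μ.map (A n) := fun n => rfl
  have hcoeB : ∀ n, (νB n : Measure ℝ) = μ.map (B n) := fun n => rfl
  have hcoeγ : (γ' : Measure ℝ) = γ := rfl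
  have hBtend : Tendsto νB atTop (𝓝 γ') := by
    rw [ProbabilityMeasure.tendsto_iff_forall_integral_tendsto]
    intro f
    have h : ∀ n, ∫ x, f x ∂(νB n : Measure ℝ) = ∫ ω, f (B n ω) ∂μ := fun n => by
      rw [hcoeB, integral_map (hB n) f.continuous.measurable.aestronglyMeasurable]
    rw [hcoeγ]
    simpa only [h] using hBconv f
  have hclosed : ∀ F : Set ℝ, IsClosed F →
      (atTop.limsup fun n => (νA n : Measure ℝ) F) ≤ (γ' : Measure ℝ) F := by
    intro F F_closed
    have key : ∀ ε : ℝ, 0 < ε →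
        (atTop.limsup fun n => (νA n : Measure ℝ) F) ≤ γ (cthickening ε F) := by
      intro ε hε
      have hsub : ∀ n, (νA n : Measure ℝ) F ≤
          (νB n : Measure ℝ) (cthickening ε F) + μ {ω | ε ≤ dist (A n ω - B n ω) 0} := by
        intro n
        rw [hcoeA, hcoeB, Measure.map_apply_of_aemeasurable (hA n) F_closed.measurableSet,
          Measure.map_apply_of_aemeasurable (hB n) isClosed_cthickening.measurableSet]
        refine le_trans (measure_mono ?_) (measure_union_le _ _)
        intro ω hω
        rcases le_or_gt ε (dist (A n ω - B n ω) 0) with h | h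
        · exact Or.inr h
        · left
          refine mem_cthickening_of_dist_le (B n ω) (A n ω) ε F hω ?_
          rw [Real.dist_eq, sub_zero] at h
          rw [Real.dist_eq, abs_sub_comm]
          linarith
      have h2 : (atTop.limsup fun n => (νB n : Measure ℝ) (cthickening ε F)) ≤
          γ (cthickening ε F) := by
        have := ProbabilityMeasure.limsup_measure_closed_le_of_tendsto hBtend
          (isClosed_cthickening (δ := ε) (E := F))
        rwa [hcoeγ] at this
      refine ENNReal.le_of_forall_pos_le_add fun δ hδ _ => ?_
      have hδ2 : (0:ℝ≥0∞) < δ / 2 := by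
        simp only [ENNReal.div_pos_iff]
        exact ⟨by exact_mod_cast hδ.ne', by norm_num⟩
      have hev1 : ∀ᶠ n in atTop,
          (νB n : Measure ℝ) (cthickening ε F) < γ (cthickening ε F) + δ / 2 :=
        eventually_lt_of_limsup_lt
          (lt_of_le_of_lt h2 (ENNReal.lt_add_right (measure_ne_top _ _) hδ2.ne'))
      have hev2 : ∀ᶠ n in atTop, μ {ω | ε ≤ dist (A n ω - B n ω) 0} < δ / 2 := by
        have h0 := tendstoInMeasure_iff_dist.mp hdiff ε hε
        simp only [Pi.zero_apply] at h0
        exact h0.eventually_lt_const hδ2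
      refine limsup_le_of_le (by isBoundedDefault) ?_
      filter_upwards [hev1, hev2] with n h1 h2'
      calc (νA n : Measure ℝ) F ≤ _ + _ := hsub n
        _ ≤ (γ (cthickening ε F) + δ / 2) + δ / 2 := add_le_add h1.le h2'.le
        _ = γ (cthickening ε F) + ↑δ := by rw [add_assoc, ENNReal.add_halves]
    rw [hcoeγ]
    have hct : Tendsto (fun r => γ (cthickening r F)) (𝓝[>] (0:ℝ)) (𝓝 (γ F)) := by
      refine Tendsto.mono_left ?_ nhdsWithin_le_nhds
      exact tendsto_measure_cthickening_of_isClosed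
        ⟨1, one_pos, measure_ne_top γ _⟩ F_closed
    refine ge_of_tendsto hct ?_
    filter_upwards [self_mem_nhdsWithin] with r hr
    exact key r hr
  haveI : ∀ n, IsProbabilityMeasure ((νA n : Measure ℝ)) := fun n => (νA n).2
  have hopen : ∀ G : Set ℝ, IsOpen G →
      (γ' : Measure ℝ) G ≤ atTop.liminf fun n => (νA n : Measure ℝ) G :=
    limsup_measure_closed_le_iff_liminf_measure_open_ge.mp hclosed
  have hAtend : Tendsto νA atTop (𝓝 γ') := by
    apply tendsto_of_forall_isOpen_le_liminf
    intro G G_open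
    have aux : ENNReal.ofNNReal (liminf (fun n => νA n G) atTop) =
        liminf (ENNReal.ofNNReal ∘ fun n => νA n G) atTop := by
      refine Monotone.map_liminf_of_continuousAt (F := atTop) ENNReal.coe_mono (νA · G) ?_ ?_ ?_
      · exact ENNReal.continuous_coe.continuousAt
      · exact IsBoundedUnder.isCoboundedUnder_ge ⟨1, by simp⟩
      · exact ⟨0, by simp⟩
    rw [← ENNReal.coe_le_coe, aux]
    have := hopen G G_open
    simpa only [Function.comp_def, ProbabilityMeasure.ennreal_coeFn_eq_coeFn_toMeasure] using this
  have := ProbabilityMeasure.tendsto_iff_forall_integral_tendsto.mp hAtend g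
  rw [hcoeγ] at this
  have h : ∀ n, ∫ x, g x ∂(νA n : Measure ℝ) = ∫ ω, g (A n ω) ∂μ := fun n => by
    rw [hcoeA, integral_map (hA n) g.continuous.measurable.aestronglyMeasurable]
  simpa only [h] using this

section Aux

variable {Ω : Type*} {m0 : MeasurableSpace Ω} {μ : Measure Ω}

/-- `σ = √(∫ f²)` equals the real-valued `L²` norm. -/
lemma sqrt_integral_sq_eq_toReal_eLpNorm [IsProbabilityMeasure μ] {f : Ω → ℝ}
    (hf : MemLp f 2 μ) :
    Real.sqrt (∫ ω, (f ω) ^ 2 ∂μ) = (eLpNorm f 2 μ).toReal := by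
  rw [hf.eLpNorm_eq_integral_rpow_norm two_ne_zero ENNReal.ofNat_ne_top]
  have h2 : (2 : ℝ≥0∞).toReal = (2 : ℝ) := by simp
  rw [h2]
  have hint : ∫ ω, ‖f ω‖ ^ (2:ℝ) ∂μ = ∫ ω, (f ω) ^ 2 ∂μ := by
    refine integral_congr_ae (Filter.Eventually.of_forall fun ω => ?_)
    simp only
    rw [show ((2:ℝ) = ((2:ℕ):ℝ)) by norm_num, Real.rpow_natCast]
    simp [sq_abs]
  rw [hint, ENNReal.toReal_ofReal (by positivity), Real.sqrt_eq_rpow, one_div]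

end Aux


/-- Proposition 1.4 (CLT part): under `X_i = Y_i + U_i - U_{i+1}`,
`liminf (1/n)E(Σ Y_i)² > 0` and `U_n/√n → 0` in `L²`, the normalized sums
`(1/σ̄_n) Σ_{i=1}^n X_i` converge in distribution to the standard normal law
if and only if `(1/σ_n) Σ_{i=1}^n Y_i` do. -/
theorem clt_equivalence
    {Ω : Type*} {m0 : MeasurableSpace Ω} {μ : Measure Ω} [IsProbabilityMeasure μ]
    (𝓕 : Filtration ℕ m0) (X Y U : ℕ → Ω → ℝ)
    (hY2 : ∀ i, MemLp (Y i) 2 μ) (hU2 : ∀ i, MemLp (U i) 2 μ)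
    (hYmeas : ∀ i, AEStronglyMeasurable[𝓕 i] (Y i) μ)
    (hYmds : ∀ i, 1 ≤ i → μ[Y i | 𝓕 (i - 1)] =ᵐ[μ] 0)
    (hdecomp : ∀ i, X i = fun ω => Y i ω + U i ω - U (i + 1) ω)
    (hliminf : 0 < Filter.liminf (fun n : ℕ =>
      (1 / (n : ℝ)) * ∫ ω, (∑ i ∈ Finset.Icc 1 n, Y i ω) ^ 2 ∂μ) atTop)
    (hUo : Tendsto (fun n : ℕ =>
      eLpNorm (fun ω => U n ω / Real.sqrt n) 2 μ) atTop (𝓝 0))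
    (σbar σ : ℕ → ℝ)
    (hσbar : ∀ n, σbar n = Real.sqrt (∫ ω, (∑ i ∈ Finset.Icc 1 n, X i ω) ^ 2 ∂μ))
    (hσ : ∀ n, σ n = Real.sqrt (∫ ω, (∑ i ∈ Finset.Icc 1 n, Y i ω) ^ 2 ∂μ)) :
    (∀ g : BoundedContinuousFunction ℝ ℝ,
      Tendsto (fun n : ℕ => ∫ ω, g ((σbar n)⁻¹ * ∑ i ∈ Finset.Icc 1 n, X i ω) ∂μ)
        atTop (𝓝 (∫ x, g x ∂(gaussianReal 0 1)))) ↔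
    (∀ g : BoundedContinuousFunction ℝ ℝ,
      Tendsto (fun n : ℕ => ∫ ω, g ((σ n)⁻¹ * ∑ i ∈ Finset.Icc 1 n, Y i ω) ∂μ)
        atTop (𝓝 (∫ x, g x ∂(gaussianReal 0 1)))) := by
  -- abbreviations
  set SY : ℕ → Ω → ℝ := fun n ω => ∑ i ∈ Finset.Icc 1 n, Y i ω with hSYdef
  set SX : ℕ → Ω → ℝ := fun n ω => ∑ i ∈ Finset.Icc 1 n, X i ω with hSXdef
  set W : ℕ → Ω → ℝ := fun n ω => U 1 ω - U (n + 1) ω with hWdef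
  -- telescoping identity
  have htel : ∀ n ω, SX n ω = SY n ω + W n ω := by
    intro n
    induction n with
    | zero => intro ω; simp [hSXdef, hSYdef, hWdef]
    | succ n ih =>
      intro ω
      have h1 : SX (n+1) ω = SX n ω + X (n+1) ω := by
        simp only [hSXdef]
        rw [Finset.sum_Icc_succ_top (Nat.one_le_iff_ne_zero.mpr (Nat.succ_ne_zero n))]
      have h2 : SY (n+1) ω = SY n ω + Y (n+1) ω := by
        simp only [hSYdef]
        rw [Finset.sum_Icc_succ_top (Nat.one_le_iff_ne_zero.mpr (Nat.succ_ne_zero n))]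
      rw [h1, h2, ih ω, hdecomp (n+1)]
      simp only [hWdef]
      ring
  -- MemLp facts
  have hSY2 : ∀ n, MemLp (SY n) 2 μ := fun n =>
    memLp_finset_sum (Finset.Icc 1 n) (fun i _ => hY2 i)
  have hW2 : ∀ n, MemLp (W n) 2 μ := fun n => (hU2 1).sub (hU2 (n+1))
  have hSX2 : ∀ n, MemLp (SX n) 2 μ := by
    intro n
    have : SX n = fun ω => SY n ω + W n ω := funext (htel n)
    rw [this]
    exact (hSY2 n).add (hW2 n)
  -- norms as toReal of eLpNorm
  have hσ' : ∀ n, σ n = (eLpNorm (SY n) 2 μ).toReal := fun n => by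
    rw [hσ n]; exact sqrt_integral_sq_eq_toReal_eLpNorm (hSY2 n)
  have hσbar' : ∀ n, σbar n = (eLpNorm (SX n) 2 μ).toReal := fun n => by
    rw [hσbar n]; exact sqrt_integral_sq_eq_toReal_eLpNorm (hSX2 n)
  have hσnn : ∀ n, 0 ≤ σ n := fun n => by rw [hσ n]; exact Real.sqrt_nonneg _
  have hσbarnn : ∀ n, 0 ≤ σbar n := fun n => by rw [hσbar n]; exact Real.sqrt_nonneg _
  set t : ℕ → ℝ := fun n => (eLpNorm (U n) 2 μ).toReal with htdef
  set r : ℕ → ℝ := fun n => (eLpNorm (W n) 2 μ).toReal with hrdef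
  have htnn : ∀ n, 0 ≤ t n := fun n => ENNReal.toReal_nonneg
  have hrnn : ∀ n, 0 ≤ r n := fun n => ENNReal.toReal_nonneg
  have hr_le : ∀ n, r n ≤ t 1 + t (n + 1) := by
    intro n
    have h := eLpNorm_sub_le (hU2 1).aestronglyMeasurable
      (hU2 (n+1)).aestronglyMeasurable one_le_two (μ := μ)
    have hfin : eLpNorm (U 1) 2 μ + eLpNorm (U (n+1)) 2 μ ≠ ∞ :=
      ENNReal.add_ne_top.mpr ⟨(hU2 1).2.ne, (hU2 (n+1)).2.ne⟩
    calc r n ≤ (eLpNorm (U 1) 2 μ + eLpNorm (U (n+1)) 2 μ).toReal :=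
          ENNReal.toReal_mono hfin h
      _ = t 1 + t (n+1) := ENNReal.toReal_add (hU2 1).2.ne (hU2 (n+1)).2.ne
  -- L² smallness of U n / √n, real version
  have ht : Tendsto (fun n : ℕ => t n / Real.sqrt n) atTop (𝓝 0) := by
    have heq : ∀ n : ℕ, (eLpNorm (fun ω => U n ω / Real.sqrt n) 2 μ).toReal
        = t n / Real.sqrt n := by
      intro n
      have hfun : (fun ω => U n ω / Real.sqrt n) = (Real.sqrt n)⁻¹ • U n := by
        funext ω
        simp [div_eq_inv_mul, Pi.smul_apply, smul_eq_mul]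
      rw [hfun, eLpNorm_const_smul]
      rw [ENNReal.toReal_mul, toReal_enorm, Real.norm_eq_abs,
        abs_of_nonneg (inv_nonneg.mpr (Real.sqrt_nonneg _))]
      rw [div_eq_inv_mul]
    have hfin : ∀ n : ℕ, eLpNorm (fun ω => U n ω / Real.sqrt n) 2 μ ≠ ∞ := by
      intro n
      have hfun : (fun ω => U n ω / Real.sqrt n) = (Real.sqrt n)⁻¹ • U n := by
        funext ω
        simp [div_eq_inv_mul, Pi.smul_apply, smul_eq_mul]
      rw [hfun]
      exact ((hU2 n).const_smul _).2.ne
    have := (ENNReal.tendsto_toReal_iff hfin ENNReal.zero_ne_top).mpr hUo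
    simpa only [heq, ENNReal.toReal_zero] using this
  -- r n / √n → 0
  have hsq2 : ∀ n : ℕ, 1 ≤ n → Real.sqrt (n + 1) ≤ 2 * Real.sqrt n := by
    intro n hn
    have h4 : Real.sqrt (4 * n) = 2 * Real.sqrt n := by
      rw [show (4:ℝ) * n = (2:ℝ)^2 * n by norm_num, Real.sqrt_mul (by positivity),
        Real.sqrt_sq (by norm_num)]
    rw [← h4]
    apply Real.sqrt_le_sqrt
    have : (1:ℝ) ≤ n := by exact_mod_cast hn
    linarith
  have hsqrt_atTop : Tendsto (fun n : ℕ => Real.sqrt n) atTop atTop := by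
    have h1 : Tendsto (fun x : ℝ => x ^ (1/2 : ℝ)) atTop atTop :=
      tendsto_rpow_atTop (by norm_num)
    have h2 : Tendsto (fun n : ℕ => (n : ℝ)) atTop atTop := tendsto_natCast_atTop_atTop
    have := h1.comp h2
    refine this.congr fun n => ?_
    simp [Real.sqrt_eq_rpow]
  have hrn : Tendsto (fun n : ℕ => r n / Real.sqrt n) atTop (𝓝 0) := by
    have hbound : ∀ᶠ n : ℕ in atTop, r n / Real.sqrt n ≤
        t 1 / Real.sqrt n + 2 * t (n+1) / Real.sqrt (n+1) := by
      filter_upwards [eventually_ge_atTop 1] with n hn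
      have hsn : (0:ℝ) < Real.sqrt n := Real.sqrt_pos.mpr (by exact_mod_cast hn)
      have hsn1 : (0:ℝ) < Real.sqrt (n+1) := Real.sqrt_pos.mpr (by positivity)
      have h1 : r n / Real.sqrt n ≤ (t 1 + t (n+1)) / Real.sqrt n := by
        gcongr
        exact hr_le n
      have h2 : t (n+1) / Real.sqrt n ≤ 2 * t (n+1) / Real.sqrt (n+1) := by
        rw [div_le_div_iff₀ hsn hsn1]
        have hs := hsq2 n hn
        nlinarith [htnn (n+1), Real.sqrt_nonneg (n:ℝ), Real.sqrt_nonneg ((n:ℝ)+1)]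
      have h3 : (t 1 + t (n+1)) / Real.sqrt n
          = t 1 / Real.sqrt n + t (n+1) / Real.sqrt n := add_div _ _ _
      calc r n / Real.sqrt n ≤ (t 1 + t (n+1)) / Real.sqrt n := h1
        _ = t 1 / Real.sqrt n + t (n+1) / Real.sqrt n := h3
        _ ≤ t 1 / Real.sqrt n + 2 * t (n+1) / Real.sqrt (n+1) := by linarith
    have hg : Tendsto (fun n : ℕ => t 1 / Real.sqrt n + 2 * t (n+1) / Real.sqrt (n+1))
        atTop (𝓝 0) := by
      have hg1 : Tendsto (fun n : ℕ => t 1 / Real.sqrt n) atTop (𝓝 0) :=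
        Tendsto.div_atTop tendsto_const_nhds hsqrt_atTop
      have hg2' : Tendsto (fun n : ℕ => t (n+1) / Real.sqrt (n+1)) atTop (𝓝 0) := by
        refine (ht.comp (tendsto_add_atTop_nat 1)).congr fun n => ?_
        simp [Function.comp, Nat.cast_add]
      have hg2 : Tendsto (fun n : ℕ => 2 * t (n+1) / Real.sqrt (n+1)) atTop (𝓝 0) := by
        have := hg2'.const_mul (2:ℝ)
        simpa [mul_div_assoc] using this
      simpa using hg1.add hg2
    exact squeeze_zero' (Filter.Eventually.of_forall fun n =>
      div_nonneg (hrnn n) (Real.sqrt_nonneg _)) hbound hg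
  -- growth of σ
  obtain ⟨c, hc, hNc⟩ : ∃ c > 0, ∀ᶠ n : ℕ in atTop,
      Real.sqrt c * Real.sqrt n ≤ σ n := by
    set u : ℕ → ℝ := fun n =>
      (1 / (n : ℝ)) * ∫ ω, (∑ i ∈ Finset.Icc 1 n, Y i ω) ^ 2 ∂μ with hudef
    have hbd : IsBoundedUnder (· ≥ ·) atTop u := by
      refine ⟨0, Filter.eventually_map.mpr (Filter.Eventually.of_forall fun n => ?_)⟩
      exact mul_nonneg (by positivity) (integral_nonneg fun ω => sq_nonneg _)
    refine ⟨liminf u atTop / 2, half_pos hliminf, ?_⟩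
    have hev := Filter.eventually_lt_of_lt_liminf (half_lt_self hliminf) hbd
    filter_upwards [hev, eventually_ge_atTop 1] with n hn hn1
    have hnpos : (0:ℝ) < n := by exact_mod_cast hn1
    set I := ∫ ω, (∑ i ∈ Finset.Icc 1 n, Y i ω) ^ 2 ∂μ with hIdef
    have hint : liminf u atTop / 2 * n ≤ I := by
      have h2 := mul_lt_mul_of_pos_right hn hnpos
      have h3 : (1 / (n:ℝ)) * I * n = I := by field_simp
      rw [show u n = (1 / (n:ℝ)) * I from rfl] at h2
      rw [h3] at h2
      exact h2.le
    rw [hσ n, ← hIdef]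
    calc Real.sqrt (liminf u atTop / 2) * Real.sqrt n
        = Real.sqrt (liminf u atTop / 2 * n) :=
        (Real.sqrt_mul (half_pos hliminf).le _).symm
      _ ≤ Real.sqrt I := Real.sqrt_le_sqrt hint
  set sc := Real.sqrt c with hscdef
  have hscpos : 0 < sc := Real.sqrt_pos.mpr hc
  -- |σbar - σ| ≤ r
  have habs : ∀ n, |σbar n - σ n| ≤ r n := by
    intro n
    have hSXeq : SX n = SY n + W n := funext fun ω => htel n ω
    have hSYeq : SY n = SX n - W n := by
      funext ω
      simp [htel n ω]
    have h1 : eLpNorm (SX n) 2 μ ≤ eLpNorm (SY n) 2 μ + eLpNorm (W n) 2 μ := by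
      rw [hSXeq]
      exact eLpNorm_add_le (hSY2 n).aestronglyMeasurable (hW2 n).aestronglyMeasurable one_le_two
    have h2 : eLpNorm (SY n) 2 μ ≤ eLpNorm (SX n) 2 μ + eLpNorm (W n) 2 μ := by
      rw [hSYeq]
      exact eLpNorm_sub_le (hSX2 n).aestronglyMeasurable (hW2 n).aestronglyMeasurable one_le_two
    have h1' : σbar n ≤ σ n + r n := by
      rw [hσbar' n, hσ' n]
      calc (eLpNorm (SX n) 2 μ).toReal
          ≤ (eLpNorm (SY n) 2 μ + eLpNorm (W n) 2 μ).toReal :=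
            ENNReal.toReal_mono (ENNReal.add_ne_top.mpr ⟨(hSY2 n).2.ne, (hW2 n).2.ne⟩) h1
        _ = _ := ENNReal.toReal_add (hSY2 n).2.ne (hW2 n).2.ne
    have h2' : σ n ≤ σbar n + r n := by
      rw [hσbar' n, hσ' n]
      calc (eLpNorm (SY n) 2 μ).toReal
          ≤ (eLpNorm (SX n) 2 μ + eLpNorm (W n) 2 μ).toReal :=
            ENNReal.toReal_mono (ENNReal.add_ne_top.mpr ⟨(hSX2 n).2.ne, (hW2 n).2.ne⟩) h2
        _ = _ := ENNReal.toReal_add (hSX2 n).2.ne (hW2 n).2.ne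
    rw [abs_sub_le_iff]
    constructor <;> linarith
  -- eventual smallness of r
  have hev_r : ∀ᶠ n : ℕ in atTop, r n ≤ sc / 2 * Real.sqrt n := by
    have hlt : ∀ᶠ n : ℕ in atTop, r n / Real.sqrt n < sc / 2 :=
      hrn.eventually_lt_const (by positivity)
    filter_upwards [hlt, eventually_ge_atTop 1] with n hn hn1
    have hsn : (0:ℝ) < Real.sqrt n := Real.sqrt_pos.mpr (by exact_mod_cast hn1)
    rw [div_lt_iff₀ hsn] at hn
    linarith
  -- main eventual bound
  set A : ℕ → Ω → ℝ := fun n ω => (σbar n)⁻¹ * SX n ω with hAdef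
  set B : ℕ → Ω → ℝ := fun n ω => (σ n)⁻¹ * SY n ω with hBdef
  have hA2 : ∀ n, MemLp (A n) 2 μ := fun n => (hSX2 n).const_mul _
  have hB2 : ∀ n, MemLp (B n) 2 μ := fun n => (hSY2 n).const_mul _
  have hmain : ∀ᶠ n : ℕ in atTop,
      (eLpNorm (fun ω => A n ω - B n ω) 2 μ).toReal ≤ 4 / sc * (r n / Real.sqrt n) := by
    filter_upwards [hNc, hev_r, eventually_ge_atTop 1] with n hσge hr' hn1
    have hsn : (0:ℝ) < Real.sqrt n := Real.sqrt_pos.mpr (by exact_mod_cast hn1)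
    have hσpos : 0 < σ n := lt_of_lt_of_le (by positivity) hσge
    have hσbarpos : 0 < σbar n := by
      have := habs n
      have h1 : σ n - r n ≤ σbar n := by
        rw [abs_sub_le_iff] at this
        linarith [this.2]
      have h2 : sc / 2 * Real.sqrt n ≤ σ n - r n := by
        have := hσge
        linarith [hr']
      have : sc / 2 * Real.sqrt n ≤ σbar n := le_trans h2 h1
      linarith [mul_pos (half_pos hscpos) hsn]
    have hσbarge : sc / 2 * Real.sqrt n ≤ σbar n := by
      have h1 : σ n - r n ≤ σbar n := by
        have := habs n
        rw [abs_sub_le_iff] at this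
        linarith [this.2]
      linarith [hσge, hr']
    -- decomposition of A - B
    have hfun : (fun ω => A n ω - B n ω)
        = ((σbar n)⁻¹ - (σ n)⁻¹) • SY n + (σbar n)⁻¹ • W n := by
      funext ω
      simp only [hAdef, hBdef, Pi.add_apply, Pi.smul_apply, smul_eq_mul]
      rw [htel n ω]
      ring
    have hle : eLpNorm (fun ω => A n ω - B n ω) 2 μ ≤
        (‖(σbar n)⁻¹ - (σ n)⁻¹‖₊ : ℝ≥0∞) * eLpNorm (SY n) 2 μ +
        (‖(σbar n)⁻¹‖₊ : ℝ≥0∞) * eLpNorm (W n) 2 μ := by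
      rw [hfun]
      refine le_trans (eLpNorm_add_le ((hSY2 n).const_smul _).aestronglyMeasurable
        ((hW2 n).const_smul _).aestronglyMeasurable one_le_two) ?_
      rw [eLpNorm_const_smul, eLpNorm_const_smul, enorm_eq_nnnorm, enorm_eq_nnnorm]
    have hfin1 : (‖(σbar n)⁻¹ - (σ n)⁻¹‖₊ : ℝ≥0∞) * eLpNorm (SY n) 2 μ ≠ ∞ :=
      ENNReal.mul_ne_top ENNReal.coe_ne_top (hSY2 n).2.ne
    have hfin2 : (‖(σbar n)⁻¹‖₊ : ℝ≥0∞) * eLpNorm (W n) 2 μ ≠ ∞ :=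
      ENNReal.mul_ne_top ENNReal.coe_ne_top (hW2 n).2.ne
    have hreal : (eLpNorm (fun ω => A n ω - B n ω) 2 μ).toReal ≤
        |(σbar n)⁻¹ - (σ n)⁻¹| * σ n + (σbar n)⁻¹ * r n := by
      calc (eLpNorm (fun ω => A n ω - B n ω) 2 μ).toReal
          ≤ ((‖(σbar n)⁻¹ - (σ n)⁻¹‖₊ : ℝ≥0∞) * eLpNorm (SY n) 2 μ +
            (‖(σbar n)⁻¹‖₊ : ℝ≥0∞) * eLpNorm (W n) 2 μ).toReal :=
            ENNReal.toReal_mono (ENNReal.add_ne_top.mpr ⟨hfin1, hfin2⟩) hle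
        _ = |(σbar n)⁻¹ - (σ n)⁻¹| * σ n + (σbar n)⁻¹ * r n := by
            rw [ENNReal.toReal_add hfin1 hfin2, ENNReal.toReal_mul, ENNReal.toReal_mul,
              ENNReal.coe_toReal, ENNReal.coe_toReal, coe_nnnorm, coe_nnnorm,
              Real.norm_eq_abs, Real.norm_eq_abs, hσ' n, hrdef,
              abs_of_nonneg (inv_nonneg.mpr hσbarpos.le)]
    -- arithmetic
    have hc1 : |(σbar n)⁻¹ - (σ n)⁻¹| * σ n = |σbar n - σ n| / σbar n := by
      rw [show (σbar n)⁻¹ - (σ n)⁻¹ = (σ n - σbar n) / (σ n * σbar n) by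
        field_simp]
      rw [abs_div, abs_of_pos (mul_pos hσpos hσbarpos), abs_sub_comm,
        div_mul_eq_mul_div, mul_comm (σ n) (σbar n),
        mul_div_mul_right _ _ hσpos.ne']
    have hbd : |(σbar n)⁻¹ - (σ n)⁻¹| * σ n + (σbar n)⁻¹ * r n ≤ 2 * r n / σbar n := by
      rw [hc1]
      have h1 : |σbar n - σ n| / σbar n ≤ r n / σbar n := by
        gcongr
        exact habs n
      have h2 : (σbar n)⁻¹ * r n = r n / σbar n := by rw [inv_mul_eq_div]
      rw [h2]
      have : r n / σbar n + r n / σbar n = 2 * r n / σbar n := by ring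
      linarith
    have hfinal : 2 * r n / σbar n ≤ 4 / sc * (r n / Real.sqrt n) := by
      have hb : 0 < sc / 2 * Real.sqrt n := by positivity
      have h1 : 2 * r n / σbar n ≤ 2 * r n / (sc / 2 * Real.sqrt n) :=
        div_le_div_of_nonneg_left (by linarith [hrnn n]) hb hσbarge
      have h2 : 2 * r n / (sc / 2 * Real.sqrt n) = 4 / sc * (r n / Real.sqrt n) := by
        field_simp
        ring
      linarith
    linarith
  -- convergence of the L² difference
  have hΔto : Tendsto (fun n => (eLpNorm (fun ω => A n ω - B n ω) 2 μ).toReal)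
      atTop (𝓝 0) := by
    refine squeeze_zero' (Filter.Eventually.of_forall fun n => ENNReal.toReal_nonneg)
      hmain ?_
    have := hrn.const_mul (4 / sc)
    simpa using this
  have hΔfin : ∀ n, eLpNorm (fun ω => A n ω - B n ω) 2 μ ≠ ∞ := fun n =>
    ((hA2 n).sub (hB2 n)).2.ne
  have hΔ : Tendsto (fun n => eLpNorm (fun ω => A n ω - B n ω) 2 μ) atTop (𝓝 0) := by
    rw [← ENNReal.tendsto_toReal_iff hΔfin ENNReal.zero_ne_top]
    simpa using hΔto
  -- convergence in measure, both directions
  have hABm : ∀ n, AEStronglyMeasurable (fun ω => A n ω - B n ω) μ := fun n =>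
    ((hA2 n).sub (hB2 n)).aestronglyMeasurable
  have hdiffAB : TendstoInMeasure μ (fun n ω => A n ω - B n ω) atTop 0 := by
    refine tendstoInMeasure_of_tendsto_eLpNorm_of_ne_top two_ne_zero ENNReal.ofNat_ne_top
      hABm aestronglyMeasurable_const ?_
    refine hΔ.congr fun n => ?_
    apply eLpNorm_congr_ae
    filter_upwards with ω
    show A n ω - B n ω = (A n ω - B n ω) - 0
    rw [sub_zero]
  have hdiffBA : TendstoInMeasure μ (fun n ω => B n ω - A n ω) atTop 0 := by
    refine tendstoInMeasure_of_tendsto_eLpNorm_of_ne_top two_ne_zero ENNReal.ofNat_ne_top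
      (fun n => ((hB2 n).sub (hA2 n)).aestronglyMeasurable) aestronglyMeasurable_const ?_
    have hneg : ∀ n, eLpNorm (fun ω => B n ω - A n ω) 2 μ
        = eLpNorm (fun ω => A n ω - B n ω) 2 μ := by
      intro n
      rw [show (fun ω => B n ω - A n ω) = -(fun ω => A n ω - B n ω) by
        funext ω; simp]
      exact eLpNorm_neg _ _ _
    refine (Tendsto.congr (fun n => (hneg n).symm) hΔ).congr fun n => ?_
    apply eLpNorm_congr_ae
    filter_upwards with ω
    show B n ω - A n ω = (B n ω - A n ω) - 0
    rw [sub_zero]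
  -- conclude via Slutsky
  have hAmeas : ∀ n, AEMeasurable (A n) μ := fun n => (hA2 n).aestronglyMeasurable.aemeasurable
  have hBmeas : ∀ n, AEMeasurable (B n) μ := fun n => (hB2 n).aestronglyMeasurable.aemeasurable
  constructor
  · intro hconv g
    exact slutsky_aux hBmeas hAmeas hdiffBA hconv g
  · intro hconv g
    exact slutsky_aux hAmeas hBmeas hdiffAB hconv g
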